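/- Let d be a prime, N ≥ 1, and let e ∈ (ZMod d)^N × (ZMod d)^N be a nonzero error element. Then the unitary matrix W(e) has exactly d distinct eigenvalues, and for every eigenvalue μ of W(e) the eigenspace {v ∈ ℂ^{d^N} : W(e) v = μ v} has complex dimension d^{N−1}. -/

import Mathlib

open Matrix Complex

noncomputable section

/-- ω = exp(2πi/d). -/
def omga (d : ℕ) : ℂ := Complex.exp (2 * Real.pi * Complex.I / d)

/-- The Weyl operator W_{k,l}: (j,j') entry is ω^{jk} if j' = j + l, else 0. -/
def weyl (d : ℕ) (k l : ZMod d) : Matrix (ZMod d) (ZMod d) ℂ :=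
  Matrix.of fun j j' => if j' = j + l then omga d ^ (j * k).val else 0

/-- N-fold Kronecker product W(e) = W_{k₁,l₁} ⊗ ⋯ ⊗ W_{k_N,l_N}, indexed by Fin N → ZMod d. -/
def weylN (d N : ℕ) (e : (Fin N → ZMod d) × (Fin N → ZMod d)) :
    Matrix (Fin N → ZMod d) (Fin N → ZMod d) ℂ :=
  Matrix.of fun j j' => ∏ n, weyl d (e.1 n) (e.2 n) (j n) (j' n)

namespace WeylAux

open DirectSum

lemma omga_prim (d : ℕ) [NeZero d] : IsPrimitiveRoot (omga d) d :=
  Complex.isPrimitiveRoot_exp d (NeZero.ne d)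

lemma omga_ne_zero (d : ℕ) : omga d ≠ 0 := Complex.exp_ne_zero _

/-- The character m ↦ ω^(m.val). -/
def chi (d : ℕ) (m : ZMod d) : ℂ := omga d ^ m.val

variable {d : ℕ} [NeZero d]

lemma omga_pow_mod (n : ℕ) : omga d ^ (n % d) = omga d ^ n := by
  conv_rhs => rw [← Nat.div_add_mod n d]
  rw [pow_add, pow_mul, (omga_prim d).pow_eq_one, one_pow, one_mul]

lemma chi_add (a b : ZMod d) : chi d (a + b) = chi d a * chi d b := by
  rw [chi, chi, chi, ZMod.val_add, omga_pow_mod, pow_add]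

lemma chi_zero : chi d (0 : ZMod d) = 1 := by simp [chi]

lemma chi_ne_zero (a : ZMod d) : chi d a ≠ 0 := pow_ne_zero _ (omga_ne_zero d)

lemma chi_sum {ι : Type*} (s : Finset ι) (g : ι → ZMod d) :
    chi d (∑ n ∈ s, g n) = ∏ n ∈ s, chi d (g n) := by
  induction s using Finset.cons_induction with
  | empty => simpa using chi_zero
  | cons a s ha ih => rw [Finset.sum_cons, Finset.prod_cons, chi_add, ih]

lemma chi_sub_mul (a b : ZMod d) : chi d (a - b) * chi d b = chi d a := by
  rw [← chi_add, sub_add_cancel]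

variable {N : ℕ}

lemma weylN_apply (e : (Fin N → ZMod d) × (Fin N → ZMod d)) (j j' : Fin N → ZMod d) :
    weylN d N e j j' = if j' = j + e.2 then ∏ n, chi d (j n * e.1 n) else 0 := by
  show (∏ n, weyl d (e.1 n) (e.2 n) (j n) (j' n)) = _
  by_cases h : j' = j + e.2
  · subst h
    rw [if_pos rfl]
    refine Finset.prod_congr rfl fun n _ => ?_
    show (if j n + e.2 n = j n + e.2 n then omga d ^ ((j n) * (e.1 n)).val else 0) = _
    rw [if_pos rfl]; rfl
  · rw [if_neg h]
    have hex : ∃ n, j' n ≠ j n + e.2 n := by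
      by_contra hc
      push_neg at hc
      exact h (funext fun n => hc n)
    obtain ⟨n, hn⟩ := hex
    exact Finset.prod_eq_zero (Finset.mem_univ n) (if_neg hn)

lemma weylN_mul (e e' : (Fin N → ZMod d) × (Fin N → ZMod d)) :
    weylN d N e * weylN d N e' =
      chi d (∑ n, e.2 n * e'.1 n) • weylN d N (e + e') := by
  ext j j''
  rw [Matrix.mul_apply]
  simp only [weylN_apply, Matrix.smul_apply, smul_eq_mul, ite_mul, zero_mul,
    Finset.sum_ite_eq', Finset.mem_univ, if_true]
  have hcond : (j'' = j + e.2 + e'.2) ↔ (j'' = j + (e + e').2) := by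
    rw [add_assoc]; rfl
  by_cases h : j'' = j + (e + e').2
  · rw [if_pos (hcond.mpr h), if_pos h]
    rw [← chi_sum, ← chi_sum, ← chi_sum, ← chi_add, ← chi_add, ← Finset.sum_add_distrib,
      ← Finset.sum_add_distrib]
    congr 1
    refine Finset.sum_congr rfl fun n _ => ?_
    show j n * e.1 n + (j n + e.2 n) * e'.1 n = e.2 n * e'.1 n + j n * (e.1 n + e'.1 n)
    ring
  · rw [if_neg (fun hh => h (hcond.mp hh)), if_neg h]
    simp



lemma weylN_zero : weylN d N (0 : (Fin N → ZMod d) × (Fin N → ZMod d)) = 1 := by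
  ext j j'
  rw [weylN_apply]
  simp only [Prod.snd_zero, add_zero, Prod.fst_zero, Pi.zero_apply, mul_zero, chi_zero,
    Finset.prod_const_one, Matrix.one_apply]
  by_cases h : j' = j
  · rw [if_pos h, if_pos h.symm]
  · rw [if_neg h, if_neg (fun hh => h hh.symm)]

lemma weylN_pow (e : (Fin N → ZMod d) × (Fin N → ZMod d)) (m : ℕ) :
    ∃ c : ℂ, c ≠ 0 ∧ weylN d N e ^ m = c • weylN d N (m • e) := by
  induction m with
  | zero => exact ⟨1, one_ne_zero, by simp [weylN_zero]⟩
  | succ m ih =>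
    obtain ⟨c, hc, hcm⟩ := ih
    refine ⟨c * chi d (∑ n, (m • e).2 n * e.1 n),
      mul_ne_zero hc (chi_ne_zero _), ?_⟩
    rw [pow_succ, hcm, Matrix.smul_mul, weylN_mul, succ_nsmul, smul_smul]

lemma weylN_pow_d (e : (Fin N → ZMod d) × (Fin N → ZMod d)) :
    ∃ c : ℂ, c ≠ 0 ∧ weylN d N e ^ d = c • 1 := by
  obtain ⟨c, hc, h⟩ := weylN_pow e d
  have hde : d • e = 0 := by
    have h1 : ∀ x : ZMod d, d • x = 0 := by
      intro x
      rw [nsmul_eq_mul, ZMod.natCast_self, zero_mul]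
    ext n
    · exact h1 _
    · exact h1 _
  rw [hde, weylN_zero] at h
  exact ⟨c, hc, h⟩

/-- Key abstract lemma. -/
lemma key {V : Type*} [AddCommGroup V] [Module ℂ V] [FiniteDimensional ℂ V] [Nontrivial V]
    {d : ℕ} (hd : 0 < d) (f g : Module.End ℂ V) {u c : ℂ}
    (hu : IsPrimitiveRoot u d) (hc : c ≠ 0) (hfd : f ^ d = c • 1)
    (hg : Function.Bijective g) (hcomm : g * f = u • (f * g)) :
    {μ : ℂ | f.HasEigenvalue μ}.ncard = d ∧
      ∀ μ : ℂ, f.HasEigenvalue μ →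
        d * Module.finrank ℂ (f.eigenspace μ) = Module.finrank ℂ V := by
  haveI : NeZero d := ⟨hd.ne'⟩
  set r : ℂ → ℕ := fun μ => Module.finrank ℂ (f.eigenspace μ) with hr
  have hu0 : u ≠ 0 := by
    intro h
    have h1 := hu.pow_eq_one
    rw [h, zero_pow hd.ne'] at h1
    exact zero_ne_one h1
  -- step: r μ ≤ r (u⁻¹ μ)
  have hstep : ∀ μ : ℂ, r μ ≤ r (u⁻¹ * μ) := by
    intro μ
    have hmap : Submodule.map g (f.eigenspace μ) ≤ f.eigenspace (u⁻¹ * μ) := by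
      rintro x hx
      obtain ⟨v, hv, rfl⟩ := hx
      rw [SetLike.mem_coe, Module.End.mem_eigenspace_iff] at hv
      rw [Module.End.mem_eigenspace_iff]
      have h1 : g (f v) = u • f (g v) := by
        have h2 := LinearMap.congr_fun hcomm v
        simpa [Module.End.mul_apply] using h2
      rw [hv, LinearMap.map_smul] at h1
      calc f (g v) = u⁻¹ • (u • f (g v)) := by rw [inv_smul_smul₀ hu0]
        _ = u⁻¹ • (μ • g v) := by rw [← h1]
        _ = (u⁻¹ * μ) • g v := by rw [smul_smul]
    calc r μ = Module.finrank ℂ (Submodule.map g (f.eigenspace μ)) :=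
          (Submodule.equivMapOfInjective g hg.injective _).finrank_eq
      _ ≤ r (u⁻¹ * μ) := Submodule.finrank_mono hmap
  have hconst : ∀ μ : ℂ, r (u⁻¹ * μ) = r μ := by
    intro μ
    have hmono : Monotone (fun i : ℕ => r (u⁻¹ ^ i * μ)) := by
      apply monotone_nat_of_le_succ
      intro i
      have h1 := hstep (u⁻¹ ^ i * μ)
      rwa [← mul_assoc, ← pow_succ'] at h1
    have hud : u⁻¹ ^ d = 1 := by rw [inv_pow, hu.pow_eq_one, inv_one]
    have h0d : r (u⁻¹ ^ d * μ) = r μ := by rw [hud, one_mul]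
    have h1 : r (u⁻¹ ^ 1 * μ) ≤ r (u⁻¹ ^ d * μ) := hmono hd
    have h2 : r (u⁻¹ ^ 0 * μ) ≤ r (u⁻¹ ^ 1 * μ) := hmono (Nat.zero_le 1)
    rw [h0d] at h1
    rw [pow_zero, one_mul] at h2
    rw [pow_one] at h1 h2
    exact le_antisymm h1 h2
  have hpow : ∀ (i : ℕ) (μ : ℂ), r (u ^ i * μ) = r μ := by
    intro i
    induction i with
    | zero => intro μ; rw [pow_zero, one_mul]
    | succ i ih =>
      intro μ
      have hup : r (u * μ) = r μ := by
        have h2 := hconst (u * μ)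
        rw [inv_mul_cancel_left₀ hu0] at h2
        exact h2.symm
      rw [show u ^ (i + 1) * μ = u ^ i * (u * μ) by ring, ih, hup]
  -- existence of an eigenvalue
  obtain ⟨μ₀, hμ₀⟩ := Module.End.exists_eigenvalue f
  have eigen_pow_eq : ∀ μ : ℂ, f.HasEigenvalue μ → μ ^ d = c := by
    intro μ hμ
    obtain ⟨v, hv⟩ := hμ.exists_hasEigenvector
    have hvk : ∀ k : ℕ, (f ^ k) v = μ ^ k • v := by
      intro k
      induction k with
      | zero => simp
      | succ k ih =>
        rw [pow_succ, Module.End.mul_apply, hv.apply_eq_smul, LinearMap.map_smul, ih,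
          smul_smul, ← pow_succ']
    have h1 := hvk d
    rw [hfd] at h1
    have h2 : (c - μ ^ d) • v = 0 := by
      rw [sub_smul, ← h1]
      simp
    rcases smul_eq_zero.mp h2 with h3 | h3
    · exact (sub_eq_zero.mp h3).symm
    · exact absurd h3 hv.right
  have hμ₀d : μ₀ ^ d = c := eigen_pow_eq μ₀ hμ₀
  have hμ₀0 : μ₀ ≠ 0 := by
    intro h
    exact hc (by rw [← hμ₀d, h, zero_pow hd.ne'])
  have hr_pos_iff : ∀ μ : ℂ, f.HasEigenvalue μ ↔ 0 < r μ := by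
    intro μ
    constructor
    · intro h
      exact Module.finrank_pos_iff.mpr (Submodule.nontrivial_iff_ne_bot.mpr h)
    · intro h
      exact Submodule.nontrivial_iff_ne_bot.mp (Module.finrank_pos_iff.mp h)
  have hr₀pos : 0 < r μ₀ := (hr_pos_iff μ₀).mp hμ₀
  have hEig : ∀ i : ℕ, f.HasEigenvalue (u ^ i * μ₀) := by
    intro i
    refine (hr_pos_iff _).mpr ?_
    rw [hpow]
    exact hr₀pos
  have hinj : Function.Injective (fun i : Fin d => u ^ (i : ℕ) * μ₀) := by
    intro i j hij
    simp only at hij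
    exact Fin.ext (hu.pow_inj i.isLt j.isLt (mul_right_cancel₀ hμ₀0 hij))
  have hS : {μ : ℂ | f.HasEigenvalue μ} =
      ↑(Finset.image (fun i : Fin d => u ^ (i : ℕ) * μ₀) Finset.univ) := by
    ext μ
    simp only [Set.mem_setOf_eq, Finset.coe_image, Finset.coe_univ, Set.image_univ,
      Set.mem_range]
    constructor
    · intro hμ
      have hμd := eigen_pow_eq μ hμ
      have hpow1 : (μ * μ₀⁻¹) ^ d = 1 := by
        rw [mul_pow, hμd, inv_pow, hμ₀d, mul_inv_cancel₀ hc]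
      obtain ⟨i, hi, hiq⟩ := hu.eq_pow_of_pow_eq_one hpow1
      exact ⟨⟨i, hi⟩, by rw [hiq, inv_mul_cancel_right₀ hμ₀0]⟩
    · rintro ⟨i, rfl⟩
      exact hEig i
  constructor
  · rw [hS, Set.ncard_coe_finset, Finset.card_image_of_injective _ hinj,
      Finset.card_univ, Fintype.card_fin]
  · -- dimension count
    set A : Fin d → Submodule ℂ V := fun i => f.eigenspace (u ^ (i : ℕ) * μ₀) with hA
    have hind : iSupIndep A := f.eigenspaces_iSupIndep.comp hinj
    have htop : ⨆ i, A i = ⊤ := by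
      rw [eq_top_iff]
      rintro v -
      have hμi0 : ∀ i : Fin d, u ^ (i : ℕ) * μ₀ ≠ 0 :=
        fun i => mul_ne_zero (pow_ne_zero _ hu0) hμ₀0
      have hμid : ∀ i : Fin d, (u ^ (i : ℕ) * μ₀) ^ d = c := by
        intro i
        rw [mul_pow, ← pow_mul, mul_comm (i : ℕ) d, pow_mul, hu.pow_eq_one, one_pow,
          one_mul, hμ₀d]
      have hwmem : ∀ i : Fin d,
          ((d : ℂ)⁻¹ • ∑ m ∈ Finset.range d,
            ((u ^ (i : ℕ) * μ₀)⁻¹) ^ m • (f ^ m) v) ∈ A i := by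
        intro i
        have hμ0' : (u ^ (i : ℕ) * μ₀) ≠ 0 := hμi0 i
        rw [Module.End.mem_eigenspace_iff]
        have hfG : ∀ m : ℕ, f (((u ^ (i : ℕ) * μ₀)⁻¹) ^ m • (f ^ m) v) =
            (u ^ (i : ℕ) * μ₀) • (((u ^ (i : ℕ) * μ₀)⁻¹) ^ (m + 1) • (f ^ (m + 1)) v) := by
          intro m
          have h1 : f ((f ^ m) v) = (f ^ (m + 1)) v := by
            rw [pow_succ', Module.End.mul_apply]
          have heq : (u ^ (i : ℕ) * μ₀) * ((u ^ (i : ℕ) * μ₀)⁻¹) ^ (m + 1) =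
              ((u ^ (i : ℕ) * μ₀)⁻¹) ^ m := by
            rw [pow_succ, mul_comm (((u ^ (i : ℕ) * μ₀)⁻¹) ^ m) ((u ^ (i : ℕ) * μ₀)⁻¹),
              ← mul_assoc, mul_inv_cancel₀ hμ0', one_mul]
          rw [LinearMap.map_smul, smul_smul, heq, h1]
        have hGd : ((u ^ (i : ℕ) * μ₀)⁻¹) ^ d • (f ^ d) v =
            ((u ^ (i : ℕ) * μ₀)⁻¹) ^ 0 • (f ^ 0) v := by
          rw [hfd, pow_zero, pow_zero, one_smul, Module.End.one_apply]
          have h1 : ((c • (1 : Module.End ℂ V))) v = c • v := by simp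
          rw [h1, smul_smul, inv_pow, ← hμid i, inv_mul_cancel₀ (pow_ne_zero _ hμ0'),
            one_smul]
        have hshift : (∑ m ∈ Finset.range d,
              ((u ^ (i : ℕ) * μ₀)⁻¹) ^ (m + 1) • (f ^ (m + 1)) v) =
            ∑ m ∈ Finset.range d, ((u ^ (i : ℕ) * μ₀)⁻¹) ^ m • (f ^ m) v := by
          have h1 : (∑ m ∈ Finset.range (d + 1),
                ((u ^ (i : ℕ) * μ₀)⁻¹) ^ m • (f ^ m) v) =
              (∑ m ∈ Finset.range d, ((u ^ (i : ℕ) * μ₀)⁻¹) ^ (m + 1) • (f ^ (m + 1)) v)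
                + ((u ^ (i : ℕ) * μ₀)⁻¹) ^ 0 • (f ^ 0) v :=
            Finset.sum_range_succ' (fun m => ((u ^ (i : ℕ) * μ₀)⁻¹) ^ m • (f ^ m) v) d
          have h2 : (∑ m ∈ Finset.range (d + 1),
                ((u ^ (i : ℕ) * μ₀)⁻¹) ^ m • (f ^ m) v) =
              (∑ m ∈ Finset.range d, ((u ^ (i : ℕ) * μ₀)⁻¹) ^ m • (f ^ m) v)
                + ((u ^ (i : ℕ) * μ₀)⁻¹) ^ d • (f ^ d) v :=
            Finset.sum_range_succ (fun m => ((u ^ (i : ℕ) * μ₀)⁻¹) ^ m • (f ^ m) v) d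
          rw [hGd] at h2
          exact add_right_cancel ((h1.symm.trans h2))
        rw [LinearMap.map_smul, map_sum]
        rw [Finset.sum_congr rfl fun m _ => hfG m, ← Finset.smul_sum, hshift, smul_comm]
      have hdC : (d : ℂ) ≠ 0 := Nat.cast_ne_zero.mpr hd.ne'
      have hsum : (∑ i : Fin d, (d : ℂ)⁻¹ • ∑ m ∈ Finset.range d,
          ((u ^ (i : ℕ) * μ₀)⁻¹) ^ m • (f ^ m) v) = v := by
        rw [← Finset.smul_sum, Finset.sum_comm]
        have hterm : ∀ m ∈ Finset.range d,
            (∑ i : Fin d, ((u ^ (i : ℕ) * μ₀)⁻¹) ^ m • (f ^ m) v) =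
              ((∑ i : Fin d, (((u⁻¹) ^ m) ^ (i : ℕ))) * (μ₀⁻¹) ^ m) • (f ^ m) v := by
          intro m _
          calc (∑ i : Fin d, ((u ^ (i : ℕ) * μ₀)⁻¹) ^ m • (f ^ m) v)
              = ∑ i : Fin d, ((((u⁻¹) ^ m) ^ (i : ℕ)) * (μ₀⁻¹) ^ m) • (f ^ m) v := by
                refine Finset.sum_congr rfl fun i _ => ?_
                congr 1
                rw [mul_inv, mul_pow, ← inv_pow, ← pow_mul, mul_comm (i : ℕ) m, pow_mul]
            _ = (∑ i : Fin d, (((u⁻¹) ^ m) ^ (i : ℕ)) * (μ₀⁻¹) ^ m) • (f ^ m) v :=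
                (Finset.sum_smul).symm
            _ = ((∑ i : Fin d, (((u⁻¹) ^ m) ^ (i : ℕ))) * (μ₀⁻¹) ^ m) • (f ^ m) v := by
                rw [← Finset.sum_mul]
        rw [Finset.sum_congr rfl hterm]
        have hzero : ∀ m ∈ Finset.range d, m ≠ 0 →
            ((∑ i : Fin d, (((u⁻¹) ^ m) ^ (i : ℕ))) * (μ₀⁻¹) ^ m) • (f ^ m) v = 0 := by
          intro m hm hm0
          have hgeom : (∑ i : Fin d, (((u⁻¹) ^ m) ^ (i : ℕ))) = 0 := by
            rw [Fin.sum_univ_eq_sum_range (fun i => ((u⁻¹) ^ m) ^ i) d]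
            have hz1 : (u⁻¹) ^ m ≠ 1 :=
              hu.inv.pow_ne_one_of_pos_of_lt hm0
                (Finset.mem_range.mp hm)
            rw [geom_sum_eq hz1, ← pow_mul, mul_comm m d, pow_mul, inv_pow, hu.pow_eq_one,
              inv_one, one_pow]
            simp
          rw [hgeom, zero_mul, zero_smul]
        rw [Finset.sum_eq_single_of_mem 0 (Finset.mem_range.mpr hd) hzero]
        simp [hdC]
      rw [← hsum]
      exact Submodule.sum_mem _ fun i _ => Submodule.mem_iSup_of_mem i (hwmem i)
    have hInternal : DirectSum.IsInternal A :=
      (DirectSum.isInternal_submodule_iff_iSupIndep_and_iSup_eq_top A).mpr ⟨hind, htop⟩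
    have hfr : Module.finrank ℂ V = ∑ i, Module.finrank ℂ (A i) := by
      have hequiv : (⨁ i, A i) ≃ₗ[ℂ] V :=
        LinearEquiv.ofBijective (DirectSum.coeLinearMap A) hInternal
      rw [← hequiv.finrank_eq, Module.finrank_directSum]
    have hAi : ∀ i : Fin d, Module.finrank ℂ (A i) = r μ₀ := fun i => hpow (i : ℕ) μ₀
    have hfr2 : Module.finrank ℂ V = d * r μ₀ := by
      rw [hfr, Finset.sum_congr rfl fun i _ => hAi i, Finset.sum_const, Finset.card_univ,
        Fintype.card_fin, smul_eq_mul]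
    intro μ hμ
    have hμS : μ ∈ {μ : ℂ | f.HasEigenvalue μ} := hμ
    rw [hS] at hμS
    simp only [Finset.coe_image, Finset.coe_univ, Set.image_univ, Set.mem_range] at hμS
    obtain ⟨i, rfl⟩ := hμS
    rw [show Module.finrank ℂ ↥(f.eigenspace (u ^ (i : ℕ) * μ₀)) = r (u ^ (i:ℕ) * μ₀) from rfl,
      hpow, hfr2]

end WeylAux

/-- for prime d, N ≥ 1 and nonzero error element e, the matrix W(e) has exactly
d distinct eigenvalues, each of whose eigenspaces has dimension d^{N-1}. -/
theorem weylN_eigenvalues_card_and_eigenspace_dim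
    (d N : ℕ) [NeZero d] (hd : d.Prime) (hN : 1 ≤ N)
    (e : (Fin N → ZMod d) × (Fin N → ZMod d)) (he : e ≠ 0) :
    {μ : ℂ | Module.End.HasEigenvalue (Matrix.toLin' (weylN d N e)) μ}.ncard = d ∧
    ∀ μ : ℂ, Module.End.HasEigenvalue (Matrix.toLin' (weylN d N e)) μ →
      Module.finrank ℂ ↥(Module.End.eigenspace (Matrix.toLin' (weylN d N e)) μ) = d ^ (N - 1) := by
  classical
  have hcase : (∃ m, e.1 m ≠ 0) ∨ (∃ m, e.2 m ≠ 0) := by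
    by_contra hcon
    push_neg at hcon
    obtain ⟨h1, h2⟩ := hcon
    exact he (Prod.ext (funext fun n => h1 n) (funext fun n => h2 n))
  obtain ⟨e', he'⟩ : ∃ e' : (Fin N → ZMod d) × (Fin N → ZMod d),
      (∑ n, e'.2 n * e.1 n) - (∑ n, e.2 n * e'.1 n) ≠ 0 := by
    rcases hcase with ⟨m, hm⟩ | ⟨m, hm⟩
    · refine ⟨(0, Pi.single m 1), ?_⟩
      simp only [Pi.single_apply, ite_mul, one_mul, zero_mul, Finset.sum_ite_eq',
        Finset.mem_univ, if_true, Pi.zero_apply, mul_zero,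
        Finset.sum_const_zero, sub_zero]
      exact hm
    · refine ⟨(Pi.single m 1, 0), ?_⟩
      simp only [Pi.single_apply, mul_ite, mul_one, mul_zero, Finset.sum_ite_eq',
        Finset.mem_univ, if_true, Pi.zero_apply, zero_mul,
        Finset.sum_const_zero, zero_sub, ne_eq, neg_eq_zero]
      exact hm
  set a : ZMod d := ∑ n, e'.2 n * e.1 n with ha
  set b : ZMod d := ∑ n, e.2 n * e'.1 n with hb
  -- primitive root u
  have hu : IsPrimitiveRoot (WeylAux.chi d (a - b)) d := by
    have hv0 : (a - b).val ≠ 0 := by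
      intro h
      exact he' ((ZMod.val_eq_zero _).mp h)
    have hcop : ((a - b).val).Coprime d :=
      Nat.Coprime.symm ((Nat.Prime.coprime_iff_not_dvd hd).mpr
        (fun hdvd => hv0 (Nat.eq_zero_of_dvd_of_lt hdvd (ZMod.val_lt _))))
    exact (WeylAux.omga_prim d).pow_of_coprime _ hcop
  obtain ⟨c, hc, hMd⟩ := WeylAux.weylN_pow_d (d := d) (N := N) e
  obtain ⟨c', hc', hM'd⟩ := WeylAux.weylN_pow_d (d := d) (N := N) e'
  have hmat : weylN d N e' * weylN d N e =
      WeylAux.chi d (a - b) • (weylN d N e * weylN d N e') := by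
    rw [WeylAux.weylN_mul e' e, WeylAux.weylN_mul e e', add_comm e' e, smul_smul,
      WeylAux.chi_sub_mul]
  have tpow : ∀ (B : Matrix (Fin N → ZMod d) (Fin N → ZMod d) ℂ) (k : ℕ),
      Matrix.toLin' (B ^ k) = (Matrix.toLin' B) ^ k := by
    intro B k
    induction k with
    | zero =>
      rw [pow_zero, pow_zero, Matrix.toLin'_one, Module.End.one_eq_id]
    | succ k ih =>
      rw [pow_succ, pow_succ, Matrix.toLin'_mul, ih, ← Module.End.mul_eq_comp]
  set f := Matrix.toLin' (weylN d N e) with hf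
  set g := Matrix.toLin' (weylN d N e') with hg0
  have hfd : f ^ d = c • 1 := by
    rw [hf, ← tpow, hMd, _root_.map_smul, Matrix.toLin'_one, ← Module.End.one_eq_id]
  have hcomm : g * f = (WeylAux.chi d (a - b)) • (f * g) := by
    have h1 := congrArg Matrix.toLin' hmat
    rw [Matrix.toLin'_mul, _root_.map_smul, Matrix.toLin'_mul, ← Module.End.mul_eq_comp,
      ← Module.End.mul_eq_comp] at h1
    exact h1
  have hgbij : Function.Bijective g := by
    have hd1 : d - 1 + 1 = d := Nat.succ_pred_eq_of_pos hd.pos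
    set B := c'⁻¹ • (weylN d N e') ^ (d - 1) with hB
    have h1 : weylN d N e' * B = 1 := by
      rw [hB, Matrix.mul_smul, ← pow_succ', hd1, hM'd, smul_smul, inv_mul_cancel₀ hc',
        one_smul]
    have h2 : B * weylN d N e' = 1 := by
      rw [hB, Matrix.smul_mul, ← pow_succ, hd1, hM'd, smul_smul, inv_mul_cancel₀ hc',
        one_smul]
    have hleft : ∀ z, Matrix.toLin' B (g z) = z := by
      intro z
      rw [hg0, ← Matrix.toLin'_mul_apply, h2, Matrix.toLin'_one, LinearMap.id_apply]
    have hright : ∀ z, g (Matrix.toLin' B z) = z := by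
      intro z
      rw [hg0, ← Matrix.toLin'_mul_apply, h1, Matrix.toLin'_one, LinearMap.id_apply]
    constructor
    · intro x y hxy
      rw [← hleft x, ← hleft y, hxy]
    · intro y
      exact ⟨Matrix.toLin' B y, hright y⟩
  haveI : Nontrivial ((Fin N → ZMod d) → ℂ) := inferInstance
  obtain ⟨hcard, hdim⟩ := WeylAux.key hd.pos f g hu hc hfd hgbij hcomm
  refine ⟨hcard, ?_⟩
  intro μ hμ
  have h1 := hdim μ hμ
  have hfr : Module.finrank ℂ ((Fin N → ZMod d) → ℂ) = d ^ N := by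
    rw [Module.finrank_pi, Fintype.card_fun, ZMod.card, Fintype.card_fin]
  rw [hfr] at h1
  have h2 : d ^ N = d * d ^ (N - 1) := by
    conv_lhs => rw [← Nat.sub_add_cancel hN, pow_succ]
    ring
  exact Nat.eq_of_mul_eq_mul_left hd.pos (h1.trans h2)

end
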